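/- Let ε be a real random variable with E ε = 0, σ² = E ε² and v = E ε⁴ < ∞, and let b be a constant with |b| ≤ τ/2, τ > 0. Set ξ = ψ_τ(b + ε). Then σ² − 4(v + σ⁴)/τ² ≤ Var(ξ) ≤ σ². -/

import Mathlib

open MeasureTheory

/-- Truncation operator ψ_τ(u) = sign(u)·min(|u|, τ). -/
noncomputable def psi (τ u : ℝ) : ℝ := Real.sign u * min |u| τ

lemma psi_eq (τ u : ℝ) (hτ : 0 < τ) : psi τ u = max (-τ) (min τ u) := by
  unfold psi
  rcases lt_trichotomy u 0 with h | h | h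
  · rw [Real.sign_of_neg h, abs_of_neg h]
    rcases le_total (-u) τ with h2 | h2
    · rw [min_eq_left h2, min_eq_right (by linarith), max_eq_right (by linarith)]; ring
    · rw [min_eq_right h2, min_eq_right (by linarith), max_eq_left (by linarith)]; ring
  · simp [h, hτ.le]
  · rw [Real.sign_of_pos h, abs_of_pos h, one_mul, min_comm,
      max_eq_right (by rcases le_total τ u with h2 | h2 <;> simp [min_eq_left, min_eq_right, h2] <;> linarith)]

section pt
variable {τ b e : ℝ} (hτ : 0 < τ) (hb : |b| ≤ τ / 2)

lemma ptA (hτ : 0 < τ) (hb : |b| ≤ τ / 2) :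
    (max (-τ) (min τ (b + e)) - b) ^ 2 ≤ e ^ 2 := by
  have hb' := abs_le.mp hb
  rcases le_total (b + e) (-τ) with h | h
  · rw [max_eq_left (by rcases le_total τ (b+e) with h2|h2 <;> simp [min_eq_left, min_eq_right, h2] <;> linarith)]
    nlinarith
  · rcases le_total τ (b + e) with h2 | h2
    · rw [min_eq_left h2, max_eq_right (by linarith)]; nlinarith
    · rw [min_eq_right h2, max_eq_right h]; nlinarith

lemma ptB (hτ : 0 < τ) (hb : |b| ≤ τ / 2) :
    e ^ 2 - (max (-τ) (min τ (b + e)) - b) ^ 2 ≤ e ^ 4 / (τ - |b|) ^ 2 := by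
  have hb' := abs_le.mp hb
  have ht : 0 < τ - |b| := by linarith [hb, hτ]
  rw [sub_le_iff_le_add]
  rcases le_total (b + e) (-τ) with h | h
  · rw [max_eq_left (by rcases le_total τ (b+e) with h2|h2 <;> simp [min_eq_left, min_eq_right, h2] <;> linarith)]
    have he : e ≤ -(τ - |b|) := by cases abs_cases b with
      | inl hc => rw [hc.1]; linarith
      | inr hc => rw [hc.1]; linarith
    have ht2 : (τ - |b|) ^ 2 ≤ e ^ 2 := by nlinarith
    rw [div_add' _ _ _ (by positivity), le_div_iff₀ (by positivity)]
    nlinarith [mul_nonneg (sub_nonneg.mpr ht2) (sq_nonneg e), sq_nonneg (-τ - b), sq_nonneg (τ - |b|), mul_nonneg (sq_nonneg (-τ-b)) (sq_nonneg (τ - |b|))]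
  · rcases le_total τ (b + e) with h2 | h2
    · rw [min_eq_left h2, max_eq_right (by linarith)]
      have he : τ - |b| ≤ e := by cases abs_cases b with
        | inl hc => rw [hc.1]; linarith
        | inr hc => rw [hc.1]; linarith
      have ht2 : (τ - |b|) ^ 2 ≤ e ^ 2 := by nlinarith
      rw [div_add' _ _ _ (by positivity), le_div_iff₀ (by positivity)]
      nlinarith [mul_nonneg (sub_nonneg.mpr ht2) (sq_nonneg e), mul_nonneg (sq_nonneg (τ-b)) (sq_nonneg (τ - |b|))]
    · rw [min_eq_right h2, max_eq_right h]
      have : (0:ℝ) ≤ e ^ 4 / (τ - |b|) ^ 2 := by positivity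
      linarith

lemma ptC (hτ : 0 < τ) (hb : |b| ≤ τ / 2) :
    |max (-τ) (min τ (b + e)) - (b + e)| ≤ e ^ 2 / (τ - |b|) := by
  have hb' := abs_le.mp hb
  have ht : 0 < τ - |b| := by linarith [hb, hτ]
  have hpos : (0:ℝ) ≤ e ^ 2 / (τ - |b|) := by positivity
  rcases le_total (b + e) (-τ) with h | h
  · rw [max_eq_left (by rcases le_total τ (b+e) with h2|h2 <;> simp [min_eq_left, min_eq_right, h2] <;> linarith)]
    have he : e ≤ -(τ - |b|) := by cases abs_cases b with
      | inl hc => rw [hc.1]; linarith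
      | inr hc => rw [hc.1]; linarith
    rw [abs_of_nonneg (by linarith)]
    rw [le_div_iff₀ ht]; nlinarith [sq_nonneg (e + (τ - |b|))]
  · rcases le_total τ (b + e) with h2 | h2
    · rw [min_eq_left h2, max_eq_right (by linarith)]
      have he : τ - |b| ≤ e := by cases abs_cases b with
        | inl hc => rw [hc.1]; linarith
        | inr hc => rw [hc.1]; linarith
      rw [abs_of_nonpos (by linarith), neg_sub]
      rw [le_div_iff₀ ht]; nlinarith [sq_nonneg (e - (τ - |b|))]
    · rw [min_eq_right h2, max_eq_right h, sub_self, abs_zero]; exact hpos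

end pt

theorem stmt16 {Ω : Type*} [MeasurableSpace Ω] (μ : Measure Ω) [IsProbabilityMeasure μ]
    (ε : Ω → ℝ) (hmeas : Measurable ε)
    (h1 : Integrable ε μ) (h2 : Integrable (fun ω => (ε ω) ^ 2) μ)
    (h4 : Integrable (fun ω => (ε ω) ^ 4) μ)
    (hzero : ∫ ω, ε ω ∂μ = 0)
    (τ b : ℝ) (hτ : 0 < τ) (hb : |b| ≤ τ / 2) :
    (∫ ω, (ε ω) ^ 2 ∂μ) - 4 * ((∫ ω, (ε ω) ^ 4 ∂μ) + (∫ ω, (ε ω) ^ 2 ∂μ) ^ 2) / τ ^ 2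
        ≤ (∫ ω, (psi τ (b + ε ω)) ^ 2 ∂μ) - (∫ ω, psi τ (b + ε ω) ∂μ) ^ 2 ∧
      (∫ ω, (psi τ (b + ε ω)) ^ 2 ∂μ) - (∫ ω, psi τ (b + ε ω) ∂μ) ^ 2
        ≤ ∫ ω, (ε ω) ^ 2 ∂μ := by
  have ht : 0 < τ - |b| := by
    have := abs_nonneg b; linarith
  set t := τ - |b| with htdef
  set X : Ω → ℝ := fun ω => max (-τ) (min τ (b + ε ω)) with hXdef
  have hpsi : ∀ ω, psi τ (b + ε ω) = X ω := fun ω => psi_eq τ _ hτ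
  simp_rw [hpsi]
  have hXmeas : Measurable X :=
    measurable_const.max (measurable_const.min (measurable_const.add hmeas))
  have hXabs : ∀ ω, |X ω| ≤ τ := by
    intro ω
    rw [abs_le]
    exact ⟨le_max_left _ _, max_le (by linarith) (min_le_left _ _)⟩
  have hXint : Integrable X μ := by
    refine Integrable.mono' (integrable_const τ) hXmeas.aestronglyMeasurable
      (ae_of_all _ fun ω => ?_)
    rw [Real.norm_eq_abs]; exact hXabs ω
  have hX2int : Integrable (fun ω => (X ω) ^ 2) μ := by
    refine Integrable.mono' (integrable_const (τ ^ 2)) (hXmeas.pow_const 2).aestronglyMeasurable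
      (ae_of_all _ fun ω => ?_)
    rw [Real.norm_eq_abs, abs_pow]
    exact pow_le_pow_left₀ (abs_nonneg _) (hXabs ω) 2
  set S2 := ∫ ω, (ε ω) ^ 2 ∂μ with hS2
  set S4 := ∫ ω, (ε ω) ^ 4 ∂μ with hS4
  set I1 := ∫ ω, X ω ∂μ with hI1
  set I2 := ∫ ω, (X ω) ^ 2 ∂μ with hI2
  have hS2nn : 0 ≤ S2 := integral_nonneg fun ω => sq_nonneg _
  have hS4nn : 0 ≤ S4 := integral_nonneg fun ω => by positivity
  -- integrability of (X - b)^2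
  have hXbint : Integrable (fun ω => (X ω - b) ^ 2) μ := by
    have : (fun ω => (X ω - b) ^ 2) = fun ω => (X ω) ^ 2 - 2 * b * X ω + b ^ 2 := by
      funext ω; ring
    rw [this]
    have hint1 : Integrable (fun ω => (X ω) ^ 2 - 2 * b * X ω) μ := by
      exact hX2int.sub (hXint.const_mul (2 * b))
    exact hint1.add (integrable_const _)
  -- expansion of E (X - b)^2
  have hexp : ∫ ω, (X ω - b) ^ 2 ∂μ = I2 - 2 * b * I1 + b ^ 2 := by
    have heq : (fun ω => (X ω - b) ^ 2) = fun ω => (X ω) ^ 2 - 2 * b * X ω + b ^ 2 := by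
      funext ω; ring
    have hint1 : Integrable (fun ω => (X ω) ^ 2 - 2 * b * X ω) μ := by
      exact hX2int.sub (hXint.const_mul (2 * b))
    rw [heq, integral_add hint1 (integrable_const _),
      integral_sub hX2int (hXint.const_mul (2 * b)), integral_const_mul, integral_const,
      probReal_univ, smul_eq_mul, one_mul]
  -- Var = E(X-b)^2 - (I1 - b)^2
  have hvar : I2 - I1 ^ 2 = (∫ ω, (X ω - b) ^ 2 ∂μ) - (I1 - b) ^ 2 := by
    rw [hexp]; ring
  -- upper bound on E(X-b)^2
  have hupper : ∫ ω, (X ω - b) ^ 2 ∂μ ≤ S2 :=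
    integral_mono hXbint h2 fun ω => ptA hτ hb
  -- lower bound on E(X-b)^2
  have hlower : S2 - S4 / t ^ 2 ≤ ∫ ω, (X ω - b) ^ 2 ∂μ := by
    have hmono : ∫ ω, ((ε ω) ^ 2 - (X ω - b) ^ 2) ∂μ ≤ ∫ ω, (ε ω) ^ 4 / t ^ 2 ∂μ :=
      integral_mono (h2.sub hXbint) (h4.div_const _) fun ω => ptB hτ hb
    rw [integral_sub h2 hXbint, integral_div] at hmono
    linarith
  -- bias bound
  have hbε : Integrable (fun ω => b + ε ω) μ := by
    exact (integrable_const b).add h1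
  have hbias : |I1 - b| ≤ S2 / t := by
    have hIdiff : I1 - b = ∫ ω, (X ω - (b + ε ω)) ∂μ := by
      rw [integral_sub hXint hbε, integral_add (integrable_const b) h1,
        integral_const, probReal_univ, smul_eq_mul, one_mul, hzero, add_zero]
    rw [hIdiff]
    have habs : |∫ ω, (X ω - (b + ε ω)) ∂μ| ≤ ∫ ω, |X ω - (b + ε ω)| ∂μ := by
      have := norm_integral_le_integral_norm (μ := μ) (fun ω => X ω - (b + ε ω))
      simpa [Real.norm_eq_abs] using this
    have hstep : ∫ ω, |X ω - (b + ε ω)| ∂μ ≤ ∫ ω, (ε ω) ^ 2 / t ∂μ :=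
      integral_mono ((hXint.sub hbε).abs) (h2.div_const _) fun ω => ptC hτ hb
    rw [integral_div] at hstep
    linarith
  constructor
  · -- lower bound
    have hsq : (I1 - b) ^ 2 ≤ (S2 / t) ^ 2 := by
      rw [← sq_abs (I1 - b)]
      exact pow_le_pow_left₀ (abs_nonneg _) hbias 2
    rw [hvar]
    have htle : τ / 2 ≤ t := by rw [htdef]; linarith
    have hτ2 : τ ^ 2 ≤ 4 * t ^ 2 := by nlinarith
    have h1t : S4 / t ^ 2 ≤ 4 * S4 / τ ^ 2 := by
      rw [div_le_div_iff₀ (by positivity) (by positivity)]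
      nlinarith [mul_le_mul_of_nonneg_left hτ2 hS4nn]
    have h2t : (S2 / t) ^ 2 ≤ 4 * S2 ^ 2 / τ ^ 2 := by
      rw [div_pow, div_le_div_iff₀ (by positivity) (by positivity)]
      nlinarith [mul_le_mul_of_nonneg_left hτ2 (sq_nonneg S2)]
    have : S2 - 4 * (S4 + S2 ^ 2) / τ ^ 2 ≤ (S2 - S4 / t ^ 2) - (S2 / t) ^ 2 := by
      have : 4 * (S4 + S2 ^ 2) / τ ^ 2 = 4 * S4 / τ ^ 2 + 4 * S2 ^ 2 / τ ^ 2 := by ring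
      rw [this]; linarith
    linarith
  · rw [hvar]
    nlinarith [sq_nonneg (I1 - b)]
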